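/- Let A and H be symmetric n×n real matrices, with H positive semidefinite, and assume A·H ≠ 0 (matrix product not the zero matrix). Then limsup_{|λ|→∞} Tr(exp(−2λA) H) = +∞; that is, for every R > 0 there exists λ with |λ| arbitrarily large such that Tr(exp(−2λA) H) > R. -/

import Mathlib

open Matrix

lemma psd_diag_nonneg' {n : ℕ} {M : Matrix (Fin n) (Fin n) ℝ}
    (hM : M.PosSemidef) (i : Fin n) : 0 ≤ M i i := by
  obtain ⟨B, hB⟩ : ∃ B : Matrix (Fin n) (Fin n) ℝ, M = Bᴴ * B := by
    open scoped MatrixOrder Matrix.Norms.L2Operator in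
    exact CStarAlgebra.nonneg_iff_eq_star_mul_self.mp hM.nonneg
  have : M i i = ∑ k, B k i * B k i := by
    simp [hB, Matrix.mul_apply, Matrix.conjTranspose_apply]
  rw [this]
  exact Finset.sum_nonneg fun k _ => mul_self_nonneg _

lemma psd_diag_pos_of_row_ne_zero {n : ℕ} {M : Matrix (Fin n) (Fin n) ℝ}
    (hM : M.PosSemidef) {i j : Fin n} (hij : M i j ≠ 0) : 0 < M i i := by
  obtain ⟨B, hB⟩ : ∃ B : Matrix (Fin n) (Fin n) ℝ, M = Bᴴ * B := by
    open scoped MatrixOrder Matrix.Norms.L2Operator in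
    exact CStarAlgebra.nonneg_iff_eq_star_mul_self.mp hM.nonneg
  have hMij : ∀ a b : Fin n, M a b = ∑ k, B k a * B k b := by
    intro a b
    simp [hB, Matrix.mul_apply, Matrix.conjTranspose_apply]
  rcases (psd_diag_nonneg' hM i).lt_or_eq with h | h
  · exact h
  · exfalso
    apply hij
    have hz : ∀ k, B k i = 0 := by
      intro k
      have := (Finset.sum_eq_zero_iff_of_nonneg
        (fun k _ => mul_self_nonneg (B k i))).mp (by rw [← hMij]; exact h.symm) k
        (Finset.mem_univ k)
      nlinarith [this]
    rw [hMij]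
    exact Finset.sum_eq_zero fun k _ => by rw [hz k, zero_mul]

/-- Lemma 1 of the paper (exponential symmetries give unbounded sharpness):
if `A` and `H` are symmetric `n×n` real matrices, `H` is positive semidefinite and
`A * H ≠ 0`, then `limsup_{|λ|→∞} Tr(exp (−2λA) H) = +∞`: for every `R > 0` and every
bound `c` there is `λ` with `|λ| ≥ c` and `Tr(exp (−2λA) H) > R`. -/
theorem limsup_trace_exp_eq_top {n : ℕ} (A H : Matrix (Fin n) (Fin n) ℝ)
    (hA : Aᵀ = A) (hH : H.PosSemidef) (hAH : A * H ≠ 0) :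
    ∀ R : ℝ, 0 < R → ∀ c : ℝ, ∃ lam : ℝ, c ≤ |lam| ∧
      R < (NormedSpace.exp ((-2 * lam) • A) * H).trace := by
  classical
  have hA' : A.IsHermitian := by
    have h0 : Aᴴ = Aᵀ := by
      ext i j
      simp [Matrix.conjTranspose_apply]
    rw [Matrix.IsHermitian, h0, hA]
  set U : Matrix (Fin n) (Fin n) ℝ := (hA'.eigenvectorUnitary : Matrix (Fin n) (Fin n) ℝ) with hU
  set d : Fin n → ℝ := hA'.eigenvalues with hd
  have hUU : star U * U = 1 := hA'.eigenvectorUnitary.2.1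
  have hUU' : U * star U = 1 := hA'.eigenvectorUnitary.2.2
  have hspec : A = U * Matrix.diagonal d * star U := by
    have := hA'.spectral_theorem
    rw [Unitary.conjStarAlgAut_apply] at this
    exact this
  set M : Matrix (Fin n) (Fin n) ℝ := star U * H * U with hM
  have hMpsd : M.PosSemidef := by
    have := hH.conjTranspose_mul_mul_same U
    simpa [hM, Matrix.star_eq_conjTranspose] using this
  have hfact : A * H = U * (Matrix.diagonal d * M) * star U := by
    rw [hspec, hM]
    have hH' : H = H * U * star U := by rw [mul_assoc, hUU', mul_one]
    calc U * Matrix.diagonal d * star U * H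
        = U * Matrix.diagonal d * star U * (H * U * star U) := by rw [← hH']
      _ = U * (Matrix.diagonal d * (star U * H * U)) * star U := by noncomm_ring
  have hDM : Matrix.diagonal d * M ≠ 0 := by
    intro h
    exact hAH (by rw [hfact, h, mul_zero, zero_mul])
  obtain ⟨i, j, hij⟩ : ∃ i j, d i * M i j ≠ 0 := by
    by_contra hcon
    push_neg at hcon
    apply hDM
    ext i j
    simpa [Matrix.diagonal_mul] using hcon i j
  have hdi : d i ≠ 0 := fun h => hij (by rw [h, zero_mul])
  have hMij : M i j ≠ 0 := fun h => hij (by rw [h, mul_zero])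
  have hMii : 0 < M i i := psd_diag_pos_of_row_ne_zero hMpsd hMij
  have hdabs : (0:ℝ) < 2 * |d i| := by positivity
  -- key trace formula for any lam
  have hUnit : IsUnit U := ⟨⟨U, star U, hUU', hUU⟩, rfl⟩
  have hUinv : U⁻¹ = star U := Matrix.inv_eq_left_inv hUU
  have htr : ∀ lam : ℝ, (NormedSpace.exp ((-2 * lam) • A) * H).trace
      = ∑ k, Real.exp (-2 * lam * d k) * M k k := by
    intro lam
    set D' : Matrix (Fin n) (Fin n) ℝ := Matrix.diagonal (fun k => Real.exp (-2 * lam * d k)) with hD'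
    have h1 : (-2 * lam) • A
        = U * Matrix.diagonal (fun k => -2 * lam * d k) * U⁻¹ := by
      rw [hUinv, hspec]
      have hdd : Matrix.diagonal (fun k => -2 * lam * d k)
          = (-2 * lam) • Matrix.diagonal d := by
        ext a b
        by_cases hab : a = b <;> simp [Matrix.diagonal, hab]
      rw [hdd, mul_smul_comm, smul_mul_assoc]
    have hpi : (NormedSpace.exp fun k => -2 * lam * d k)
        = fun k => Real.exp (-2 * lam * d k) := by
      funext k
      rw [Pi.coe_exp, Real.exp_eq_exp_ℝ]
    have h2 : NormedSpace.exp ((-2 * lam) • A) = U * D' * star U := by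
      rw [h1, Matrix.exp_conj U _ hUnit, Matrix.exp_diagonal, hUinv, hD', hpi]
    rw [h2]
    have h3 : U * D' * star U * H = U * (D' * (star U * H)) := by
      noncomm_ring
    rw [h3, Matrix.trace_mul_comm, mul_assoc, ← hM.symm]
    simp [hD', Matrix.trace, Matrix.diag, Matrix.mul_apply, Matrix.diagonal,
      Finset.sum_ite_eq]
  intro R hR c
  set s : ℝ := max (2 * |d i| * |c|) (Real.log (R / M i i) + 1) with hs
  have hs1 : 2 * |d i| * |c| ≤ s := le_max_left _ _
  have hs2 : Real.log (R / M i i) + 1 ≤ s := le_max_right _ _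
  have hs0 : 0 ≤ s := le_trans (by positivity) hs1
  refine ⟨-s / (2 * d i), ?_, ?_⟩
  · have habs : |-s / (2 * d i)| = s / (2 * |d i|) := by
      rw [abs_div, abs_neg, abs_of_nonneg hs0, abs_mul]
      norm_num
    rw [habs, le_div_iff₀ hdabs]
    have h5 : c * (2 * |d i|) ≤ |c| * (2 * |d i|) :=
      mul_le_mul_of_nonneg_right (le_abs_self c) hdabs.le
    nlinarith [h5, hs1]
  · rw [htr (-s / (2 * d i))]
    have hterm : Real.exp (-2 * (-s / (2 * d i)) * d i) * M i i
        ≤ ∑ k, Real.exp (-2 * (-s / (2 * d i)) * d k) * M k k :=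
      Finset.single_le_sum (f := fun k => Real.exp (-2 * (-s / (2 * d i)) * d k) * M k k)
        (fun k _ => mul_nonneg (Real.exp_pos _).le (psd_diag_nonneg' hMpsd k))
        (Finset.mem_univ i)
    have harg : -2 * (-s / (2 * d i)) * d i = s := by
      field_simp
    have hRlt : R < Real.exp s * M i i := by
      have h4 : R / M i i < Real.exp s := by
        calc R / M i i = Real.exp (Real.log (R / M i i)) :=
              (Real.exp_log (by positivity)).symm
          _ < Real.exp s := Real.exp_lt_exp.mpr (by linarith)
      calc R = (R / M i i) * M i i := by field_simp
        _ < Real.exp s * M i i := mul_lt_mul_of_pos_right h4 hMii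
    calc R < Real.exp s * M i i := hRlt
      _ = Real.exp (-2 * (-s / (2 * d i)) * d i) * M i i := by rw [harg]
      _ ≤ _ := hterm
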